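/- Let p be a prime and n a positive integer with p^k exactly dividing n. The quotient ring F_p[t]/⟨C(n,i)·t^i : i = 1,…,n⟩ is isomorphic as an F_p-algebra to F_p[t]/⟨t^(p^k)⟩. -/

import Mathlib

open Polynomial

theorem stmt_3 (p n k : ℕ) (hp : Fact p.Prime) (hn : 0 < n)
    (h1 : p ^ k ∣ n) (h2 : ¬ p ^ (k + 1) ∣ n) :
    Nonempty
      ((Polynomial (ZMod p) ⧸
          Ideal.span ((fun i : ℕ => (n.choose i : Polynomial (ZMod p)) * X ^ i) '' Set.Icc 1 n))
        ≃ₐ[ZMod p]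
       (Polynomial (ZMod p) ⧸ Ideal.span {(X : Polynomial (ZMod p)) ^ (p ^ k)})) := by
  obtain ⟨m, hm⟩ := h1
  set q := p ^ k with hqdef
  have hppos := hp.out.pos
  have hq : 0 < q := pow_pos hppos k
  have hpm : ¬ p ∣ m := by
    intro hd
    exact h2 (by rw [pow_succ, hm]; exact mul_dvd_mul_left _ hd)
  -- polynomial identity
  have hpoly : ((X + 1 : (ZMod p)[X]))^n = Polynomial.expand (ZMod p) q ((X + 1)^m) := by
    rw [map_pow, map_add, Polynomial.expand_X, map_one, hm, pow_mul,
      add_pow_char_pow]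
    simp [hqdef]
  have key : ∀ i : ℕ, ((n.choose i : ZMod p)) =
      if q ∣ i then ((m.choose (i / q) : ZMod p)) else 0 := by
    intro i
    have := congrArg (fun f => Polynomial.coeff f i) hpoly
    simp only [Polynomial.coeff_X_add_one_pow, Polynomial.coeff_expand hq] at this
    rw [this]
  have hqn : q ≤ n := Nat.le_of_dvd hn ⟨m, hm⟩
  have hchq : ((n.choose q : ZMod p)) = (m : ZMod p) := by
    rw [key q, if_pos dvd_rfl, Nat.div_self hq, Nat.choose_one_right]
  have hmne : (m : ZMod p) ≠ 0 := by
    rw [Ne, ZMod.natCast_eq_zero_iff]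
    exact hpm
  have hideal : Ideal.span ((fun i : ℕ => (n.choose i : Polynomial (ZMod p)) * X ^ i) ''
      Set.Icc 1 n) = Ideal.span {(X : Polynomial (ZMod p)) ^ q} := by
    apply le_antisymm
    · rw [Ideal.span_le]
      rintro _ ⟨i, hi, rfl⟩
      simp only [SetLike.mem_coe, Ideal.mem_span_singleton]
      by_cases hdv : q ∣ i
      · have hqi : q ≤ i := Nat.le_of_dvd (Set.mem_Icc.mp hi).1 hdv
        exact Dvd.dvd.mul_left (pow_dvd_pow X hqi) _
      · have : ((n.choose i : ZMod p)) = 0 := by rw [key i, if_neg hdv]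
        rw [show ((n.choose i : Polynomial (ZMod p))) = C ((n.choose i : ZMod p)) by
          simp, this]
        simp
    · rw [Ideal.span_le, Set.singleton_subset_iff]
      have hgen : (n.choose q : Polynomial (ZMod p)) * X ^ q ∈
          Ideal.span ((fun i : ℕ => (n.choose i : Polynomial (ZMod p)) * X ^ i) ''
            Set.Icc 1 n) :=
        Ideal.subset_span ⟨q, Set.mem_Icc.mpr ⟨hq, hqn⟩, rfl⟩
      have := Ideal.mul_mem_left _ (C ((m : ZMod p)⁻¹)) hgen
      have heq : C ((m : ZMod p)⁻¹) * ((n.choose q : Polynomial (ZMod p)) * X ^ q)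
          = X ^ q := by
        rw [show ((n.choose q : Polynomial (ZMod p))) = C ((n.choose q : ZMod p)) by simp,
          hchq, ← mul_assoc, ← C_mul, inv_mul_cancel₀ hmne, C_1, one_mul]
      rwa [heq] at this
  exact ⟨Ideal.quotientEquivAlgOfEq (ZMod p) hideal⟩
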